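/- If C₁, C₂, C₃ are independent standard Cauchy random variables (density 1/(π(1+z²))), then the probability that sign(C₁+C₂) = sign(C₁+C₃) equals 2/3. -/

import Mathlib

open MeasureTheory ProbabilityTheory Real Set Filter Topology

namespace CauchySignAux

noncomputable def cf (z : ℝ) : ℝ := 1 / (Real.pi * (1 + z ^ 2))

lemma cf_nonneg (z : ℝ) : 0 ≤ cf z := by unfold cf; positivity

lemma cf_eq (z : ℝ) : cf z = π⁻¹ * (1 + z ^ 2)⁻¹ := by
  unfold cf; rw [one_div, mul_inv]

lemma cf_cont : Continuous cf := by
  unfold cf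
  exact continuous_const.div (by continuity) fun x => by positivity

lemma cf_integrable : Integrable cf := by
  have h := integrable_inv_one_add_sq.const_mul (π⁻¹ : ℝ)
  exact h.congr (Filter.Eventually.of_forall fun x => (cf_eq x).symm)

lemma integral_Iic_cf (t : ℝ) : ∫ z in Iic t, cf z = 1 / 2 + arctan t / π := by
  simp only [cf_eq]
  rw [MeasureTheory.integral_const_mul, integral_Iic_inv_one_add_sq]
  have hπ := Real.pi_pos
  field_simp
  ring

lemma integral_Ioi_cf (t : ℝ) : ∫ z in Ioi t, cf z = 1 / 2 - arctan t / π := by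
  simp only [cf_eq]
  rw [MeasureTheory.integral_const_mul, integral_Ioi_inv_one_add_sq]
  have hπ := Real.pi_pos
  field_simp
  try ring
  try simp

noncomputable def nu : Measure ℝ := volume.withDensity fun z => ENNReal.ofReal (cf z)

lemma nu_apply {s : Set ℝ} (hs : MeasurableSet s) :
    nu s = ENNReal.ofReal (∫ z in s, cf z) := by
  rw [nu, withDensity_apply _ hs,
    ← ofReal_integral_eq_lintegral_ofReal cf_integrable.integrableOn
      (Filter.Eventually.of_forall cf_nonneg)]

lemma nu_singleton (a : ℝ) : nu {a} = 0 :=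
  withDensity_absolutelyContinuous volume _ (Real.volume_singleton)

lemma nu_Ioi (t : ℝ) : nu (Ioi t) = ENNReal.ofReal (1 / 2 - arctan t / π) := by
  rw [nu_apply measurableSet_Ioi, integral_Ioi_cf]

lemma nu_Iio (t : ℝ) : nu (Iio t) = ENNReal.ofReal (1 / 2 + arctan t / π) := by
  have h : nu (Iio t) = nu (Iic t) := by
    refine le_antisymm (measure_mono Iio_subset_Iic_self) ?_
    calc nu (Iic t) = nu (insert t (Iio t)) := by rw [Set.Iio_insert]
      _ ≤ nu {t} + nu (Iio t) := by rw [Set.insert_eq]; exact measure_union_le _ _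
      _ = nu (Iio t) := by rw [nu_singleton, zero_add]
  rw [h, nu_apply measurableSet_Iic, integral_Iic_cf]

lemma sign_eq_iff (a b : ℝ) : Real.sign a = Real.sign b ↔
    (0 < a ∧ 0 < b) ∨ (a < 0 ∧ b < 0) ∨ (a = 0 ∧ b = 0) := by
  rcases lt_trichotomy a 0 with ha | ha | ha <;> rcases lt_trichotomy b 0 with hb | hb | hb <;>
    simp [Real.sign_of_pos, Real.sign_of_neg, Real.sign_zero, ha, hb,
      lt_asymm, lt_irrefl, ne_of_gt, ne_of_lt]


lemma hasDerivAt_arctandiv (x : ℝ) : HasDerivAt (fun y => arctan y / π) (cf x) x := by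
  have h := (hasDerivAt_arctan x).div_const π
  convert h using 1
  · rfl
  · rfl
  unfold cf
  rw [div_div, mul_comm]

noncomputable def g (x : ℝ) : ℝ := (1 / 2 + arctan x / π) ^ 2 + (1 / 2 - arctan x / π) ^ 2

lemma g_nonneg (x : ℝ) : 0 ≤ g x := by unfold g; positivity

lemma g_cont : Continuous g := by
  unfold g
  have := Real.continuous_arctan
  continuity

lemma abs_arctandiv_le (x : ℝ) : |arctan x / π| ≤ 1 / 2 := by
  rw [abs_div, abs_of_pos pi_pos, div_le_iff₀ pi_pos]
  have h1 := Real.arctan_lt_pi_div_two x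
  have h2 := Real.neg_pi_div_two_lt_arctan x
  rw [abs_le]
  constructor <;> nlinarith [pi_pos]

lemma g_le_two (x : ℝ) : g x ≤ 2 := by
  have h := abs_le.1 (abs_arctandiv_le x)
  unfold g
  nlinarith [h.1, h.2]

lemma g_mul_cf_integrable : Integrable (fun x => g x * cf x) :=
  cf_integrable.bdd_mul (c := 2) g_cont.aestronglyMeasurable
    (Filter.Eventually.of_forall fun x => by rw [Real.norm_eq_abs, abs_of_nonneg (g_nonneg x)]; exact g_le_two x)

noncomputable def H (x : ℝ) : ℝ :=
  ((1 / 2 + arctan x / π) ^ 3 - (1 / 2 - arctan x / π) ^ 3) / 3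

lemma hasDerivAt_H (x : ℝ) : HasDerivAt H (g x * cf x) x := by
  have ha := hasDerivAt_arctandiv x
  have h1 := (ha.const_add (1 / 2 : ℝ)).pow 3
  have h2 := (ha.const_sub (1 / 2 : ℝ)).pow 3
  have h := (h1.sub h2).div_const 3
  convert h using 1
  · rfl
  · rfl
  · ext y; simp [H]
  unfold g
  push_cast
  ring

lemma tendsto_H_atTop : Tendsto H atTop (𝓝 (1 / 3)) := by
  have h : Tendsto arctan atTop (𝓝 (π / 2)) :=
    tendsto_nhds_of_tendsto_nhdsWithin tendsto_arctan_atTop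
  have hc : Continuous (fun u : ℝ => ((1 / 2 + u / π) ^ 3 - (1 / 2 - u / π) ^ 3) / 3) := by
    continuity
  have ht := (hc.tendsto (π / 2)).comp h
  have e : (π / 2) / π = 1 / 2 := by
    rw [div_div, mul_comm, ← div_div, div_self pi_ne_zero]
  have e2 : ((1 / 2 + (π / 2) / π) ^ 3 - (1 / 2 - (π / 2) / π) ^ 3) / 3 = (1 : ℝ) / 3 := by
    rw [e]; norm_num
  rw [e2] at ht
  exact ht

lemma tendsto_H_atBot : Tendsto H atBot (𝓝 (-(1 / 3))) := by
  have h : Tendsto arctan atBot (𝓝 (-(π / 2))) :=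
    tendsto_nhds_of_tendsto_nhdsWithin tendsto_arctan_atBot
  have hc : Continuous (fun u : ℝ => ((1 / 2 + u / π) ^ 3 - (1 / 2 - u / π) ^ 3) / 3) := by
    continuity
  have ht := (hc.tendsto (-(π / 2))).comp h
  have e : (π / 2) / π = 1 / 2 := by
    rw [div_div, mul_comm, ← div_div, div_self pi_ne_zero]
  have e2 : ((1 / 2 + -(π / 2) / π) ^ 3 - (1 / 2 - -(π / 2) / π) ^ 3) / 3 = -((1 : ℝ) / 3) := by
    rw [neg_div, e]; norm_num
  rw [e2] at ht
  exact ht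

lemma integral_g_mul_cf : ∫ x, g x * cf x = 2 / 3 := by
  rw [integral_of_hasDerivAt_of_tendsto hasDerivAt_H g_mul_cf_integrable
    tendsto_H_atBot tendsto_H_atTop]
  norm_num


lemma cf_integral : ∫ x, cf x = 1 := by
  simp only [cf_eq]
  rw [MeasureTheory.integral_const_mul, integral_univ_inv_one_add_sq,
    inv_mul_cancel₀ pi_ne_zero]

instance : IsProbabilityMeasure nu := by
  constructor
  rw [nu_apply MeasurableSet.univ, setIntegral_univ, cf_integral, ENNReal.ofReal_one]

lemma nu_prod_pair (x : ℝ) :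
    (nu.prod nu) {q : ℝ × ℝ | (0 < x + q.1 ∧ 0 < x + q.2) ∨
      (x + q.1 < 0 ∧ x + q.2 < 0) ∨ (x + q.1 = 0 ∧ x + q.2 = 0)}
      = ENNReal.ofReal ((1 / 2 + arctan x / π) ^ 2)
        + ENNReal.ofReal ((1 / 2 - arctan x / π) ^ 2) := by
  have hset : {q : ℝ × ℝ | (0 < x + q.1 ∧ 0 < x + q.2) ∨
      (x + q.1 < 0 ∧ x + q.2 < 0) ∨ (x + q.1 = 0 ∧ x + q.2 = 0)} =
      (Ioi (-x) ×ˢ Ioi (-x)) ∪ ((Iio (-x) ×ˢ Iio (-x)) ∪ ({-x} ×ˢ {-x})) := by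
    ext q
    simp only [Set.mem_setOf_eq, Set.mem_union, Set.mem_prod, Set.mem_Ioi, Set.mem_Iio,
      Set.mem_singleton_iff]
    constructor
    · rintro (⟨h1, h2⟩ | ⟨h1, h2⟩ | ⟨h1, h2⟩)
      · exact Or.inl ⟨by linarith, by linarith⟩
      · exact Or.inr (Or.inl ⟨by linarith, by linarith⟩)
      · exact Or.inr (Or.inr ⟨by linarith, by linarith⟩)
    · rintro (⟨h1, h2⟩ | ⟨h1, h2⟩ | ⟨h1, h2⟩)
      · exact Or.inl ⟨by linarith, by linarith⟩
      · exact Or.inr (Or.inl ⟨by linarith, by linarith⟩)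
      · exact Or.inr (Or.inr ⟨by linarith, by linarith⟩)
  have d1 : Disjoint (Ioi (-x) ×ˢ Ioi (-x))
      ((Iio (-x) ×ˢ Iio (-x)) ∪ ({-x} ×ˢ {-x})) := by
    rw [Set.disjoint_left]
    rintro q ⟨hq1, -⟩ (⟨h1, -⟩ | ⟨h1, -⟩)
    · exact lt_irrefl _ ((Set.mem_Ioi.1 hq1).trans (Set.mem_Iio.1 h1))
    · rw [Set.mem_singleton_iff] at h1
      rw [Set.mem_Ioi, h1] at hq1
      exact lt_irrefl _ hq1
  have d2 : Disjoint (Iio (-x) ×ˢ Iio (-x)) ({-x} ×ˢ {-x}) := by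
    rw [Set.disjoint_left]
    rintro q ⟨hq1, -⟩ ⟨h1, -⟩
    rw [Set.mem_singleton_iff] at h1
    rw [Set.mem_Iio, h1] at hq1
    exact lt_irrefl _ hq1
  rw [hset,
    measure_union d1 (((measurableSet_Iio.prod measurableSet_Iio).union
      ((measurableSet_singleton _).prod (measurableSet_singleton _)))),
    measure_union d2 ((measurableSet_singleton _).prod (measurableSet_singleton _)),
    Measure.prod_prod, Measure.prod_prod, Measure.prod_prod,
    nu_Ioi, nu_Iio, nu_singleton]
  have hb := abs_le.1 (abs_arctandiv_le x)
  rw [Real.arctan_neg, neg_div, sub_neg_eq_add, zero_mul, add_zero,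
    ← ENNReal.ofReal_mul (by linarith [hb.1] : (0:ℝ) ≤ 1 / 2 + arctan x / π),
    ← ENNReal.ofReal_mul (by linarith [hb.2] : (0:ℝ) ≤ 1 / 2 + -(arctan x / π))]
  congr 1
  · congr 1; ring
  · congr 1; ring

lemma final_lintegral :
    ∫⁻ x, (ENNReal.ofReal ((1 / 2 + arctan x / π) ^ 2)
      + ENNReal.ofReal ((1 / 2 - arctan x / π) ^ 2)) ∂nu = 2 / 3 := by
  have heq : ∀ x : ℝ, ENNReal.ofReal ((1 / 2 + arctan x / π) ^ 2)
      + ENNReal.ofReal ((1 / 2 - arctan x / π) ^ 2) = ENNReal.ofReal (g x) := fun x =>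
    (ENNReal.ofReal_add (by positivity) (by positivity)).symm
  simp only [heq]
  have hmf : Measurable fun z : ℝ => ENNReal.ofReal (cf z) :=
    ENNReal.measurable_ofReal.comp cf_cont.measurable
  have hmg : Measurable fun z : ℝ => ENNReal.ofReal (g z) :=
    ENNReal.measurable_ofReal.comp g_cont.measurable
  rw [nu, lintegral_withDensity_eq_lintegral_mul volume hmf hmg]
  simp only [Pi.mul_apply, ← ENNReal.ofReal_mul (cf_nonneg _)]
  have hint : Integrable (fun x => cf x * g x) := by
    have : (fun x => cf x * g x) = fun x => g x * cf x := funext fun x => mul_comm _ _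
    rw [this]; exact g_mul_cf_integrable
  rw [← ofReal_integral_eq_lintegral_ofReal hint
    (Filter.Eventually.of_forall fun x => mul_nonneg (cf_nonneg x) (g_nonneg x))]
  have : ∫ x, cf x * g x = 2 / 3 := by
    rw [show (fun x => cf x * g x) = fun x => g x * cf x from funext fun x => mul_comm _ _]
    exact integral_g_mul_cf
  rw [this]
  rw [ENNReal.ofReal_div_of_pos (by norm_num)]
  norm_num

end CauchySignAux

/-- If `C₁, C₂, C₃` are independent standard Cauchy random variables
(density `1/(π(1+z²))`), then `P(sign(C₁+C₂) = sign(C₁+C₃)) = 2/3`. -/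
theorem cauchy_sign_agree (Ω : Type*) [MeasurableSpace Ω] (μ : Measure Ω)
    [IsProbabilityMeasure μ] (C : Fin 3 → Ω → ℝ)
    (hmeas : ∀ i, Measurable (C i))
    (hindep : iIndepFun C μ)
    (hlaw : ∀ i, Measure.map (C i) μ =
      MeasureTheory.volume.withDensity
        (fun z => ENNReal.ofReal (1 / (Real.pi * (1 + z^2))))) :
    μ {ω | Real.sign (C 0 ω + C 1 ω) = Real.sign (C 0 ω + C 2 ω)} = 2/3 := by
  have hlaw' : ∀ i, Measure.map (C i) μ = CauchySignAux.nu := fun i => by rw [hlaw i]; rfl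
  have m1 : Measurable fun p : ℝ × ℝ × ℝ => p.1 + p.2.1 :=
    measurable_fst.add (measurable_fst.comp measurable_snd)
  have m2 : Measurable fun p : ℝ × ℝ × ℝ => p.1 + p.2.2 :=
    measurable_fst.add (measurable_snd.comp measurable_snd)
  set S : Set (ℝ × ℝ × ℝ) := {p | (0 < p.1 + p.2.1 ∧ 0 < p.1 + p.2.2) ∨
    (p.1 + p.2.1 < 0 ∧ p.1 + p.2.2 < 0) ∨ (p.1 + p.2.1 = 0 ∧ p.1 + p.2.2 = 0)} with hSdef
  have hS : MeasurableSet S :=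
    ((measurableSet_lt measurable_const m1).inter (measurableSet_lt measurable_const m2)).union
      (((measurableSet_lt m1 measurable_const).inter
        (measurableSet_lt m2 measurable_const)).union
        ((measurableSet_eq_fun m1 measurable_const).inter
          (measurableSet_eq_fun m2 measurable_const)))
  have hT : Measurable fun ω => (C 0 ω, (C 1 ω, C 2 ω)) :=
    (hmeas 0).prodMk ((hmeas 1).prodMk (hmeas 2))
  have hev : {ω | Real.sign (C 0 ω + C 1 ω) = Real.sign (C 0 ω + C 2 ω)}
      = (fun ω => (C 0 ω, (C 1 ω, C 2 ω))) ⁻¹' S := by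
    ext ω
    simpa [hSdef] using CauchySignAux.sign_eq_iff (C 0 ω + C 1 ω) (C 0 ω + C 2 ω)
  have h12 : μ.map (fun ω => (C 1 ω, C 2 ω)) = CauchySignAux.nu.prod CauchySignAux.nu := by
    rw [(indepFun_iff_map_prod_eq_prod_map_map (hmeas 1).aemeasurable
      (hmeas 2).aemeasurable).1 (hindep.indepFun (by decide)), hlaw' 1, hlaw' 2]
  have h0 : IndepFun (C 0) (fun ω => (C 1 ω, C 2 ω)) μ :=
    (hindep.indepFun_prodMk hmeas 1 2 0 (by decide) (by decide)).symm
  have hmap : μ.map (fun ω => (C 0 ω, (C 1 ω, C 2 ω))) = CauchySignAux.nu.prod (CauchySignAux.nu.prod CauchySignAux.nu) := by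
    rw [(indepFun_iff_map_prod_eq_prod_map_map (hmeas 0).aemeasurable
      ((hmeas 1).prodMk (hmeas 2)).aemeasurable).1 h0, hlaw' 0, h12]
  rw [hev, ← Measure.map_apply hT hS, hmap, Measure.prod_apply hS]
  have hinner : ∀ x : ℝ, (CauchySignAux.nu.prod CauchySignAux.nu) (Prod.mk x ⁻¹' S)
      = ENNReal.ofReal ((1 / 2 + Real.arctan x / Real.pi) ^ 2)
        + ENNReal.ofReal ((1 / 2 - Real.arctan x / Real.pi) ^ 2) := fun x => CauchySignAux.nu_prod_pair x
  simp only [hinner]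
  exact CauchySignAux.final_lintegral
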